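/- Assume the step ratios satisfy 0 < r_k < (3+√17)/2 for 2 ≤ k ≤ N. Then for every 1 ≤ n ≤ N one has Σ_{j=1}^{n} θ_{n−j}^{(n)} = τ_n, and consequently Σ_{k=1}^{n} Σ_{j=1}^{k} θ_{k−j}^{(k)} = t_n, where t_n := Σ_{k=1}^{n} τ_k. -/

import Mathlib

open Finset

/-- BDF2 kernels `b_j^{(n)}` (assuming `r 1 = 0`, so the `n = 1` case
`b_0^{(1)} = 1/τ_1` is subsumed by the general formula). -/
noncomputable def bk (τ r : ℕ → ℝ) (n j : ℕ) : ℝ :=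
  if j = 0 then (1 + 2 * r n) / (τ n * (1 + r n))
  else if j = 1 then -(r n) ^ 2 / (τ n * (1 + r n))
  else 0

/-- DOC kernels: `th τ r n m = θ_m^{(n)}`, i.e. `θ_{n-k}^{(n)}` with `m = n - k`. -/
noncomputable def th (τ r : ℕ → ℝ) (n : ℕ) : ℕ → ℝ
  | 0 => 1 / bk τ r n 0
  | m + 1 => -(1 / bk τ r (n - (m + 1)) 0) *
      ∑ i ∈ (Finset.range (m + 1)).attach,
        th τ r n i.1 * bk τ r (n - i.1) (m + 1 - i.1)
  decreasing_by exact Finset.mem_range.mp i.2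

lemma th_succ (τ r : ℕ → ℝ) (n m : ℕ) :
    th τ r n (m+1) = -(1 / bk τ r (n - (m+1)) 0) * (th τ r n m * bk τ r (n - m) 1) := by
  rw [th]
  congr 1
  rw [Finset.sum_attach (Finset.range (m+1)) (fun i => th τ r n i * bk τ r (n - i) (m+1-i))]
  rw [Finset.sum_eq_single m]
  · norm_num
  · intro i hi hne
    have h2 : m + 1 - i ≠ 0 ∧ m + 1 - i ≠ 1 := by
      simp only [Finset.mem_range] at hi; omega
    unfold bk
    rw [if_neg h2.1, if_neg h2.2, mul_zero]
  · intro h; simp at h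

lemma th_closed (N : ℕ) (τ r : ℕ → ℝ)
    (hτ : ∀ k, 1 ≤ k → k ≤ N → 0 < τ k)
    (hr1 : r 1 = 0)
    (hr : ∀ k, 2 ≤ k → k ≤ N → r k = τ k / τ (k - 1))
    (hrpos : ∀ k, 2 ≤ k → k ≤ N → 0 < r k) :
    ∀ m n, 1 ≤ n → n ≤ N → m ≤ n - 1 →
      th τ r n m = τ n * ((1 + r (n-m))/(1+2*r (n-m))) *
        ∏ i ∈ Finset.Icc (n-m+1) n, (r i/(1+2*r i)) := by
  have hr0 : ∀ k, 1 ≤ k → k ≤ N → 0 ≤ r k := by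
    intro k h1 h2
    rcases Nat.lt_or_ge k 2 with h | h
    · have : k = 1 := by omega
      simp [this, hr1]
    · exact (hrpos k h h2).le
  intro m
  induction m with
  | zero =>
    intro n h1 hN _
    have hτn := hτ n h1 hN
    have hrn := hr0 n h1 hN
    have h2 : (1 : ℝ) + r n ≠ 0 := by positivity
    have h3 : (1 : ℝ) + 2 * r n ≠ 0 := by positivity
    simp only [Nat.sub_zero]
    rw [Finset.Icc_eq_empty (by omega), Finset.prod_empty, th, bk]
    norm_num
    ring
  | succ m ih =>
    intro n h1 hN hm
    have h2nm : 2 ≤ n - m := by omega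
    have hnmN : n - m ≤ N := by omega
    have h1nm1 : 1 ≤ n - (m+1) := by omega
    have hnm1N : n - (m+1) ≤ N := by omega
    have key : n - (m + 1) = n - m - 1 := by omega
    set R := r (n - m) with hR
    set T := τ (n - m) with hT
    set r' := r (n - (m+1)) with hr'
    set T' := τ (n - (m+1)) with hT'
    have hRpos : 0 < R := hrpos _ h2nm hnmN
    have hTpos : 0 < T := hτ _ (by omega) hnmN
    have hT'pos : 0 < T' := hτ _ h1nm1 hnm1N
    have hRT : R * T' = T := by
      rw [hR, hT, hT', hr (n-m) h2nm hnmN, ← key]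
      exact div_mul_cancel₀ _ (ne_of_gt (hτ _ h1nm1 hnm1N))
    have hr'0 : 0 ≤ r' := hr0 _ h1nm1 hnm1N
    have h1R : (1:ℝ) + R ≠ 0 := by positivity
    have h12R : (1:ℝ) + 2*R ≠ 0 := by positivity
    have h12r' : (1:ℝ) + 2*r' ≠ 0 := by positivity
    rw [th_succ, ih n h1 hN (by omega)]
    have hprod : ∏ i ∈ Finset.Icc (n-(m+1)+1) n, (r i/(1+2*r i))
        = (R/(1+2*R)) * ∏ i ∈ Finset.Icc (n-m+1) n, (r i/(1+2*r i)) := by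
      have hins : Finset.Icc (n-(m+1)+1) n = insert (n-m) (Finset.Icc (n-m+1) n) := by
        ext x
        simp only [Finset.mem_Icc, Finset.mem_insert]
        omega
      rw [hins, Finset.prod_insert (by simp only [Finset.mem_Icc]; omega)]
    rw [hprod, bk]
    simp only [if_pos rfl, ← hr', ← hT']
    rw [bk]
    norm_num
    have hP2 : (0:ℝ) < ∏ x ∈ Finset.Icc (n-m+1) n, (1+2*r x) := by
      apply Finset.prod_pos
      intro i hi
      simp only [Finset.mem_Icc] at hi
      have := hr0 i (by omega) (by omega)
      positivity
    rw [← hR, ← hT, ← hRT]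
    field_simp

lemma sum_one (N : ℕ) (r : ℕ → ℝ) (hr1 : r 1 = 0)
    (hr0 : ∀ k, 1 ≤ k → k ≤ N → 0 ≤ r k) :
    ∀ n, 1 ≤ n → n ≤ N →
      ∑ j ∈ Finset.Icc 1 n, ((1+r j)/(1+2*r j)) * ∏ i ∈ Finset.Icc (j+1) n, (r i/(1+2*r i)) = 1 := by
  intro n
  induction n with
  | zero => omega
  | succ n ih =>
    intro _ hN
    rcases Nat.eq_zero_or_pos n with h0 | hpos
    · subst h0
      rw [show Finset.Icc 1 1 = {1} from rfl, Finset.sum_singleton,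
        Finset.Icc_eq_empty (by omega), Finset.prod_empty, hr1]
      norm_num
    · have h12 : (1:ℝ) + 2 * r (n+1) ≠ 0 := by
        have := hr0 (n+1) (by omega) hN
        positivity
      rw [Finset.sum_Icc_succ_top (by omega)]
      rw [Finset.Icc_eq_empty (show ¬ (n+1+1) ≤ (n+1) by omega), Finset.prod_empty, mul_one]
      have hcong : ∀ j ∈ Finset.Icc 1 n,
          ((1+r j)/(1+2*r j)) * ∏ i ∈ Finset.Icc (j+1) (n+1), (r i/(1+2*r i))
          = (((1+r j)/(1+2*r j)) * ∏ i ∈ Finset.Icc (j+1) n, (r i/(1+2*r i)))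
            * (r (n+1)/(1+2*r (n+1))) := by
        intro j hj
        simp only [Finset.mem_Icc] at hj
        rw [Finset.prod_Icc_succ_top (by omega)]
        ring
      rw [Finset.sum_congr rfl hcong, ← Finset.sum_mul, ih hpos (by omega)]
      field_simp
      rw [div_eq_one_iff_eq (by rwa [mul_comm] at h12)]
      ring

theorem stmt5 (N : ℕ) (τ r : ℕ → ℝ)
    (hτ : ∀ k, 1 ≤ k → k ≤ N → 0 < τ k)
    (hr1 : r 1 = 0)
    (hr : ∀ k, 2 ≤ k → k ≤ N → r k = τ k / τ (k - 1))
    (hratio : ∀ k, 2 ≤ k → k ≤ N → 0 < r k ∧ r k < (3 + Real.sqrt 17) / 2)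
    (n : ℕ) (hn1 : 1 ≤ n) (hnN : n ≤ N) :
    (∑ j ∈ Finset.Icc 1 n, th τ r n (n - j) = τ n) ∧
      (∑ k ∈ Finset.Icc 1 n, ∑ j ∈ Finset.Icc 1 k, th τ r k (k - j)
        = ∑ k ∈ Finset.Icc 1 n, τ k) := by
  have hrpos : ∀ k, 2 ≤ k → k ≤ N → 0 < r k := fun k h2 hN => (hratio k h2 hN).1
  have hr0 : ∀ k, 1 ≤ k → k ≤ N → 0 ≤ r k := by
    intro k h1 h2
    rcases Nat.lt_or_ge k 2 with h | h
    · have : k = 1 := by omega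
      simp [this, hr1]
    · exact (hrpos k h h2).le
  have first : ∀ m, 1 ≤ m → m ≤ N → ∑ j ∈ Finset.Icc 1 m, th τ r m (m - j) = τ m := by
    intro m hm1 hmN
    have hcong : ∀ j ∈ Finset.Icc 1 m, th τ r m (m - j)
        = τ m * (((1+r j)/(1+2*r j)) * ∏ i ∈ Finset.Icc (j+1) m, (r i/(1+2*r i))) := by
      intro j hj
      simp only [Finset.mem_Icc] at hj
      have := th_closed N τ r hτ hr1 hr hrpos (m - j) m hm1 hmN (by omega)
      rw [show m - (m - j) = j from by omega] at this
      rw [this]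
      ring
    rw [Finset.sum_congr rfl hcong, ← Finset.mul_sum,
      sum_one N r hr1 hr0 m hm1 hmN, mul_one]
  refine ⟨first n hn1 hnN, ?_⟩
  exact Finset.sum_congr rfl fun k hk => by
    simp only [Finset.mem_Icc] at hk
    exact first k hk.1 (le_trans hk.2 hnN)
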